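/- If a nonzero symmetric operator Ric on an n-dimensional real inner product space satisfies (tr Ric)^2/|Ric|^2 > n-1, then Ric is definite (all eigenvalues have the same sign). -/

import Mathlib

open scoped RealInnerProductSpace

/-- Trace of a linear map acting diagonally on a basis. -/
lemma trace_diag_aux {n : ℕ} (b : OrthonormalBasis (Fin n) ℝ (EuclideanSpace ℝ (Fin n)))
    (T : EuclideanSpace ℝ (Fin n) →ₗ[ℝ] EuclideanSpace ℝ (Fin n)) (c : Fin n → ℝ)
    (h : ∀ i, T (b i) = c i • b i) :
    LinearMap.trace ℝ _ T = ∑ i, c i := by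
  rw [LinearMap.trace_eq_matrix_trace ℝ b.toBasis, Matrix.trace]
  apply Finset.sum_congr rfl
  intro i _
  simp [Matrix.diag, LinearMap.toMatrix_apply, h i]

/-- The positive-trace case: the quadratic form is positive definite. -/
lemma stmt_1_pos (n : ℕ) (hn : 1 ≤ n)
    (Ric : EuclideanSpace ℝ (Fin n) →ₗ[ℝ] EuclideanSpace ℝ (Fin n))
    (hsym : LinearMap.IsSymmetric Ric) (hne : Ric ≠ 0)
    (hF : (n : ℝ) - 1 < (LinearMap.trace ℝ _ Ric) ^ 2 / (LinearMap.trace ℝ _ (Ric ∘ₗ Ric)))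
    (htr : 0 < LinearMap.trace ℝ _ Ric) :
    ∀ x : EuclideanSpace ℝ (Fin n), x ≠ 0 → (0:ℝ) < inner ℝ (Ric x) x := by
  have hrank : Module.finrank ℝ (EuclideanSpace ℝ (Fin n)) = n := finrank_euclideanSpace_fin
  set b := hsym.eigenvectorBasis hrank with hb
  set μ := hsym.eigenvalues hrank with hμ
  have happ : ∀ i, Ric (b i) = μ i • b i := fun i => hsym.apply_eigenvectorBasis hrank i
  have htr1 : LinearMap.trace ℝ _ Ric = ∑ i, μ i := trace_diag_aux b Ric μ happ
  have htr2 : LinearMap.trace ℝ _ (Ric ∘ₗ Ric) = ∑ i, μ i ^ 2 := by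
    apply trace_diag_aux b
    intro i
    simp [happ i, map_smul, smul_smul, sq]
  -- sum of squares is positive
  have hμne : ∃ i, μ i ≠ 0 := by
    by_contra h
    push_neg at h
    apply hne
    apply b.toBasis.ext
    intro i
    simp [happ i, h i]
  obtain ⟨i₀, hi₀⟩ := hμne
  have hSpos : 0 < ∑ i, μ i ^ 2 := by
    apply Finset.sum_pos' (fun i _ => sq_nonneg _)
    exact ⟨i₀, Finset.mem_univ _, by positivity⟩
  rw [htr2] at hF
  have hkey : ((n : ℝ) - 1) * ∑ i, μ i ^ 2 < (LinearMap.trace ℝ _ Ric) ^ 2 :=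
    (lt_div_iff₀ hSpos).mp hF
  rw [htr1] at hkey htr
  -- all eigenvalues are positive
  have hμpos : ∀ i, 0 < μ i := by
    intro k
    by_contra hk
    push_neg at hk
    set s := Finset.univ.erase k with hs
    have hcard : (s.card : ℝ) = (n : ℝ) - 1 := by
      rw [hs, Finset.card_erase_of_mem (Finset.mem_univ k), Finset.card_univ, Fintype.card_fin]
      rw [Nat.cast_sub hn]
      norm_num
    have h1 : ∑ i, μ i ≤ ∑ i ∈ s, μ i := by
      have := Finset.add_sum_erase Finset.univ μ (Finset.mem_univ k)
      rw [← this]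
      linarith
    have h2 : (∑ i, μ i) ^ 2 ≤ (∑ i ∈ s, μ i) ^ 2 := by
      apply sq_le_sq'
      · nlinarith
      · exact h1
    have h3 : (∑ i ∈ s, μ i) ^ 2 ≤ (s.card : ℝ) * ∑ i ∈ s, μ i ^ 2 := by
      exact_mod_cast sq_sum_le_card_mul_sum_sq (s := s) (f := μ)
    have h4 : ∑ i ∈ s, μ i ^ 2 ≤ ∑ i, μ i ^ 2 :=
      Finset.sum_le_sum_of_subset_of_nonneg (Finset.subset_univ s)
        (fun i _ _ => sq_nonneg _)
    have h5 : ((n:ℝ) - 1) ≥ 0 := by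
      have : (1:ℝ) ≤ n := by exact_mod_cast hn
      linarith
    nlinarith
  -- conclude positivity of the quadratic form
  intro x hx
  have hexp : (inner ℝ (Ric x) x : ℝ) = ∑ i, μ i * (b.repr x i) ^ 2 := by
    rw [← OrthonormalBasis.sum_inner_mul_inner b (Ric x) x]
    apply Finset.sum_congr rfl
    intro i _
    have h1 : (inner ℝ (Ric x) (b i) : ℝ) = inner ℝ (b i) (Ric x) := real_inner_comm _ _
    have h2 : (inner ℝ (b i) (Ric x) : ℝ) = b.repr (Ric x) i := (b.repr_apply_apply (Ric x) i).symm
    have h3 : b.repr (Ric x) i = μ i * b.repr x i :=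
      hsym.eigenvectorBasis_apply_self_apply hrank x i
    have h4 : (inner ℝ (b i) x : ℝ) = b.repr x i := (b.repr_apply_apply x i).symm
    rw [h1, h2, h3, h4]
    ring
  rw [hexp]
  have hrx : b.repr x ≠ 0 := by
    simp only [ne_eq, EmbeddingLike.map_eq_zero_iff]
    exact hx
  obtain ⟨j, hj⟩ : ∃ j, b.repr x j ≠ 0 := by
    by_contra h
    push_neg at h
    exact hrx (by ext i; simp [h i])
  apply Finset.sum_pos'
  · intro i _
    have := (hμpos i).le
    positivity
  · exact ⟨j, Finset.mem_univ _, by have := hμpos j; positivity⟩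

/-- If a nonzero symmetric operator `Ric` on an `n`-dimensional real inner
product space satisfies `(tr Ric)² / |Ric|² > n - 1`, then `Ric` is definite, i.e. the
associated quadratic form `x ↦ ⟪Ric x, x⟫` is either positive or negative on all
nonzero vectors. -/
theorem stmt_1 (n : ℕ) (hn : 1 ≤ n)
    (Ric : EuclideanSpace ℝ (Fin n) →ₗ[ℝ] EuclideanSpace ℝ (Fin n))
    (hsym : LinearMap.IsSymmetric Ric) (hne : Ric ≠ 0)
    (hF : (n : ℝ) - 1 < (LinearMap.trace ℝ _ Ric) ^ 2 / (LinearMap.trace ℝ _ (Ric ∘ₗ Ric))) :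
    (∀ x : EuclideanSpace ℝ (Fin n), x ≠ 0 → (0:ℝ) < inner ℝ (Ric x) x) ∨
    (∀ x : EuclideanSpace ℝ (Fin n), x ≠ 0 → (inner ℝ (Ric x) x : ℝ) < 0) := by
  -- trace of Ric∘Ric is positive, so the trace of Ric is nonzero
  have hrank : Module.finrank ℝ (EuclideanSpace ℝ (Fin n)) = n := finrank_euclideanSpace_fin
  set b := hsym.eigenvectorBasis hrank with hb
  set μ := hsym.eigenvalues hrank with hμ
  have happ : ∀ i, Ric (b i) = μ i • b i := fun i => hsym.apply_eigenvectorBasis hrank i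
  have htr2 : LinearMap.trace ℝ _ (Ric ∘ₗ Ric) = ∑ i, μ i ^ 2 := by
    apply trace_diag_aux b
    intro i
    simp [happ i, map_smul, smul_smul, sq]
  have hμne : ∃ i, μ i ≠ 0 := by
    by_contra h
    push_neg at h
    apply hne
    apply b.toBasis.ext
    intro i
    simp [happ i, h i]
  obtain ⟨i₀, hi₀⟩ := hμne
  have hSpos : 0 < LinearMap.trace ℝ _ (Ric ∘ₗ Ric) := by
    rw [htr2]
    apply Finset.sum_pos' (fun i _ => sq_nonneg _)
    exact ⟨i₀, Finset.mem_univ _, by positivity⟩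
  have h5 : (0:ℝ) ≤ (n:ℝ) - 1 := by
    have : (1:ℝ) ≤ n := by exact_mod_cast hn
    linarith
  have htrne : LinearMap.trace ℝ _ Ric ≠ 0 := by
    intro h
    rw [h] at hF
    simp at hF
    linarith
  rcases htrne.lt_or_gt with hneg | hpos
  · right
    -- apply the positive case to -Ric
    have hsym' : LinearMap.IsSymmetric (-Ric) := by
      intro x y
      simp only [LinearMap.neg_apply, inner_neg_left, inner_neg_right, hsym x y]
    have hne' : -Ric ≠ 0 := by
      simpa [neg_eq_zero] using hne
    have hF' : (n : ℝ) - 1 <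
        (LinearMap.trace ℝ _ (-Ric)) ^ 2 / (LinearMap.trace ℝ _ ((-Ric) ∘ₗ (-Ric))) := by
      have hcomp : (-Ric) ∘ₗ (-Ric) = Ric ∘ₗ Ric := by
        ext x
        simp
      rw [hcomp, map_neg, neg_pow]
      simpa using hF
    have htr' : 0 < LinearMap.trace ℝ _ (-Ric) := by
      rw [map_neg]
      linarith
    have := stmt_1_pos n hn (-Ric) hsym' hne' hF' htr'
    intro x hx
    have h := this x hx
    simp only [LinearMap.neg_apply, inner_neg_left] at h
    linarith
  · left
    exact stmt_1_pos n hn Ric hsym hne hF hpos
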